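/- Let A and B be n × n positive definite Hermitian complex matrices. Then (1/n)·Re(trace(A·B)) ≥ (Re(det A) · Re(det B))^{1/n}. (Since A and B are Hermitian, trace(conj(A)ᵀ·B) = trace(A·B); the trace of A·B and the determinants of A and B are real and positive.) -/

import Mathlib

open Matrix
open scoped ComplexOrder

/-- For positive definite Hermitian matrices `A`, `B`,
`(1/n)·Re(tr(A·B)) ≥ (Re(det A)·Re(det B))^{1/n}`. -/
theorem trace_mul_ge_det_rpow
    {n : ℕ} (hn : 0 < n) (A B : Matrix (Fin n) (Fin n) ℂ)
    (hA : A.PosDef) (hB : B.PosDef) :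
    ((A.det).re * (B.det).re) ^ ((1 : ℝ) / n) ≤ (1 / n : ℝ) * ((A * B).trace).re := by
  classical
  set S := (open scoped MatrixOrder in CFC.sqrt A) with hSdef
  have hSH : S.IsHermitian := (open scoped MatrixOrder in (CFC.sqrt_nonneg A).posSemidef.isHermitian)
  have hSS : S * S = A := (open scoped MatrixOrder in CFC.sqrt_mul_sqrt_self A hA.posSemidef.nonneg)
  have hAdet : (0 : ℂ) < A.det := hA.det_pos
  have hBdet : (0 : ℂ) < B.det := hB.det_pos
  have hSdet : S.det ≠ 0 := by
    intro h
    have : A.det = 0 := by rw [← hSS, det_mul, h, mul_zero]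
    exact hAdet.ne' this
  set M := S * B * S with hMdef
  have hM : M.PosDef := by
    refine posDef_iff_dotProduct_mulVec.mpr ⟨?_, fun x hx => ?_⟩
    · have := isHermitian_conjTranspose_mul_mul S hB.isHermitian
      rwa [hSH.eq] at this
    · have hSx : S *ᵥ x ≠ 0 := by
        intro h
        have hinj := (Matrix.mulVec_injective_iff_isUnit).mpr (isUnit_iff_isUnit_det S |>.2 hSdet.isUnit)
        exact hx (hinj (h.trans (mulVec_zero S).symm))
      have hpos := hB.dotProduct_mulVec_pos hSx
      calc (0:ℂ) < star (S *ᵥ x) ⬝ᵥ B *ᵥ (S *ᵥ x) := hpos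
        _ = star x ⬝ᵥ M *ᵥ x := by
            simp only [star_mulVec, hSH.eq, ← dotProduct_mulVec, mulVec_mulVec, hMdef,
              mul_assoc]
  have htr : (A * B).trace = M.trace := by
    rw [← hSS, mul_assoc, trace_mul_comm, hMdef, mul_assoc]
  have hdet : M.det = A.det * B.det := by
    rw [hMdef, det_mul, det_mul, ← hSS, det_mul]; ring
  have htrM : M.trace = ∑ i, (hM.isHermitian.eigenvalues i : ℂ) := by
    conv_lhs => rw [hM.isHermitian.spectral_theorem, Unitary.conjStarAlgAut_apply]
    rw [trace_mul_comm, ← mul_assoc,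
      (Matrix.mem_unitaryGroup_iff').mp (hM.isHermitian.eigenvectorUnitary).2, one_mul,
      trace_diagonal]
    rfl
  have hdetM : M.det = ∏ i, (hM.isHermitian.eigenvalues i : ℂ) :=
    hM.isHermitian.det_eq_prod_eigenvalues
  have hre_tr : ((A * B).trace).re = ∑ i, hM.isHermitian.eigenvalues i := by
    rw [htr, htrM]
    norm_cast
  have hAim : (A.det).im = 0 := ((Complex.lt_def.mp hAdet).2).symm
  have hBim : (B.det).im = 0 := ((Complex.lt_def.mp hBdet).2).symm
  have hre_det : (A.det).re * (B.det).re = ∏ i, hM.isHermitian.eigenvalues i := by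
    have h1 : (M.det).re = (A.det).re * (B.det).re := by
      rw [hdet, Complex.mul_re, hAim, hBim]; ring
    rw [← h1, hdetM]
    norm_cast
  rw [hre_tr, hre_det]
  have hw : ∑ _i : Fin n, (1 / n : ℝ) = 1 := by
    simp [Finset.sum_const, Finset.card_univ]
    field_simp
  have hz : ∀ i ∈ Finset.univ, (0:ℝ) ≤ hM.isHermitian.eigenvalues i :=
    fun i _ => (hM.eigenvalues_pos i).le
  have key := Real.geom_mean_le_arith_mean_weighted Finset.univ (fun _ => (1 / n : ℝ))
    (fun i => hM.isHermitian.eigenvalues i) (fun i _ => by positivity) hw hz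
  calc (∏ i, hM.isHermitian.eigenvalues i) ^ ((1:ℝ)/n)
      = ∏ i, (hM.isHermitian.eigenvalues i) ^ ((1:ℝ)/n) := by
        rw [← Real.finset_prod_rpow Finset.univ _ hz]
    _ ≤ ∑ i, (1 / n : ℝ) * hM.isHermitian.eigenvalues i := key
    _ = (1 / n : ℝ) * ∑ i, hM.isHermitian.eigenvalues i := by rw [Finset.mul_sum]
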